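/- Let 1 < q < 2 and x₀ ∈ ℂ. For each positive integer n let Δ_n = {x ∈ ℂ : |x − x₀| < 1/n} and define w_n(z) = (1/m(Δ_n)) ∫_{Δ_n} |x − x₀|^q / |z − x|^q dm_x for z ∈ ℂ. Then w_n(z) ≤ 2/(2 − q) for all z ∈ ℂ and all n. -/

import Mathlib

open MeasureTheory Metric Filter
open Set

noncomputable section

lemma lintegral_fun_norm_complex (f : ℝ → ENNReal) (hf : Measurable f) :
    ∫⁻ x : ℂ, f ‖x‖ = 2 * volume (ball (0:ℂ) 1) *
      ∫⁻ y in Ioi (0 : ℝ), ENNReal.ofReal y * f y := by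
  have hdim : Module.finrank ℝ ℂ = 2 := Complex.finrank_real_complex
  have hmeas : Measurable fun p : sphere (0:ℂ) 1 × Ioi (0:ℝ) => f p.2 :=
    hf.comp (measurable_subtype_coe.comp measurable_snd)
  calc
    ∫⁻ x : ℂ, f ‖x‖ = ∫⁻ x : ℂ in {(0:ℂ)}ᶜ, f ‖x‖ := by
      rw [restrict_compl_singleton]
    _ = ∫⁻ x : ({(0:ℂ)}ᶜ : Set ℂ), f ‖x.1‖ ∂(volume.comap Subtype.val) :=
      (lintegral_subtype_comap (measurableSet_singleton _).compl (fun x => f ‖x‖)).symm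
    _ = ∫⁻ p : sphere (0:ℂ) 1 × Ioi (0:ℝ), f p.2
          ∂((volume : Measure ℂ).toSphere.prod
            (Measure.volumeIoiPow (Module.finrank ℝ ℂ - 1))) :=
      by simpa using (volume : Measure ℂ).measurePreserving_homeomorphUnitSphereProd.lintegral_comp hmeas
    _ = (volume : Measure ℂ).toSphere univ *
          ∫⁻ y : Ioi (0:ℝ), f y ∂(Measure.volumeIoiPow (Module.finrank ℝ ℂ - 1)) := by
      rw [lintegral_prod _ hmeas.aemeasurable]
      simp [lintegral_const, mul_comm]
    _ = 2 * volume (ball (0:ℂ) 1) * ∫⁻ y in Ioi (0 : ℝ), ENNReal.ofReal y * f y := by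
      rw [Measure.toSphere_apply_univ, hdim]
      congr 1
      have hg : Measurable fun y : Ioi (0:ℝ) => f y.1 := hf.comp measurable_subtype_coe
      rw [show Measure.volumeIoiPow (2 - 1) =
            Measure.withDensity (Measure.comap Subtype.val volume)
              (fun r : Ioi (0:ℝ) => ENNReal.ofReal (r.1 ^ (1:ℕ))) from rfl,
        lintegral_withDensity_eq_lintegral_mul _
          (by exact (measurable_subtype_coe.pow_const _).ennreal_ofReal)
          hg]
      exact (lintegral_subtype_comap measurableSet_Ioi
        (fun y => ENNReal.ofReal (y ^ (1:ℕ)) * f y)).trans (by simp)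

lemma lintegral_ball_rpow (r : ℝ) (hr : 0 < r) (q : ℝ) (hq1 : 0 < q) (hq2 : q < 2) :
    ∫⁻ x : ℂ in ball 0 r, ENNReal.ofReal (‖x‖ ^ (-q)) =
      2 * volume (ball (0:ℂ) 1) * ENNReal.ofReal (r ^ (2 - q) / (2 - q)) := by
  set f : ℝ → ENNReal :=
    fun y => ENNReal.ofReal ((Ioo (0:ℝ) r).indicator (fun y => y ^ (-q)) y) with hfdef
  have hfmeas : Measurable f := by
    apply Measurable.ennreal_ofReal
    exact Measurable.indicator (measurable_id.pow_const _) measurableSet_Ioo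
  have h1 : ∫⁻ x : ℂ in ball 0 r, ENNReal.ofReal (‖x‖ ^ (-q)) = ∫⁻ x : ℂ, f ‖x‖ := by
    rw [← lintegral_indicator measurableSet_ball]
    congr 1
    funext x
    rcases eq_or_ne x 0 with rfl | hx
    · simp [hfdef, indicator, hr, Real.zero_rpow (neg_ne_zero.2 hq1.ne')]
    · by_cases hxr : ‖x‖ < r
      · rw [indicator_of_mem (mem_ball_zero_iff.2 hxr), hfdef]
        simp only
        rw [indicator_of_mem (show ‖x‖ ∈ Ioo (0:ℝ) r from ⟨norm_pos_iff.2 hx, hxr⟩)]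
      · rw [indicator_of_notMem (by simpa [mem_ball_zero_iff] using hxr), hfdef]
        simp only
        rw [indicator_of_notMem (fun h => hxr h.2)]
        simp
  rw [h1, lintegral_fun_norm_complex f hfmeas]
  congr 1
  have h2 : ∫⁻ y in Ioi (0:ℝ), ENNReal.ofReal y * f y =
      ∫⁻ y in Ioi (0:ℝ), (Ioo (0:ℝ) r).indicator
        (fun y => ENNReal.ofReal (y ^ (1 - q))) y := by
    refine setLIntegral_congr_fun measurableSet_Ioi (fun y hy => ?_)
    have hy0 : 0 < y := hy
    by_cases hyr : y ∈ Ioo (0:ℝ) r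
    · rw [indicator_of_mem hyr]
      simp only [hfdef, indicator_of_mem hyr]
      rw [← ENNReal.ofReal_mul hy0.le]
      congr 1
      rw [show (1:ℝ) - q = 1 + -q from by ring, Real.rpow_add hy0, Real.rpow_one]
    · rw [indicator_of_notMem hyr]
      simp [hfdef, indicator_of_notMem hyr]
  rw [h2, lintegral_indicator measurableSet_Ioo, Measure.restrict_restrict measurableSet_Ioo,
    inter_eq_self_of_subset_left Ioo_subset_Ioi_self]
  have hint : IntegrableOn (fun y : ℝ => y ^ (1 - q)) (Ioo 0 r) := by
    have := intervalIntegral.intervalIntegrable_rpow' (a := 0) (b := r) (r := 1 - q)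
      (by linarith)
    rw [intervalIntegrable_iff_integrableOn_Ioc_of_le hr.le] at this
    exact this.mono_set Ioo_subset_Ioc_self
  rw [← ofReal_integral_eq_lintegral_ofReal hint]
  · congr 1
    rw [← integral_Ioc_eq_integral_Ioo, ← intervalIntegral.integral_of_le hr.le,
      integral_rpow (Or.inl (by linarith))]
    rw [Real.zero_rpow (by intro h; apply hq2.ne; linarith)]
    ring_nf
  · exact ae_restrict_of_forall_mem measurableSet_Ioo fun y hy => Real.rpow_nonneg hy.1.le _

lemma lintegral_rearrange (r : ℝ) (hr : 0 < r) (q : ℝ) (hq : 0 < q) (x₀ z : ℂ) :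
    ∫⁻ x : ℂ in ball x₀ r, ENNReal.ofReal (‖z - x‖ ^ (-q)) ≤
      ∫⁻ x : ℂ in ball z r, ENNReal.ofReal (‖z - x‖ ^ (-q)) := by
  set A := ball x₀ r with hA
  set B := ball z r with hB
  set g : ℂ → ENNReal := fun x => ENNReal.ofReal (‖z - x‖ ^ (-q)) with hg
  have hAmeas : MeasurableSet A := measurableSet_ball
  have hBmeas : MeasurableSet B := measurableSet_ball
  have hgmeas : Measurable g :=
    ((measurable_const.sub measurable_id).norm.pow_const (-q)).ennreal_ofReal
  have hABvol : volume (A \ B) = volume (B \ A) := by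
    have hAv : volume A = volume B := by
      rw [hA, hB, Complex.volume_ball, Complex.volume_ball]
    have h1 : volume (A \ B) + volume (A ∩ B) = volume A :=
      measure_diff_add_inter A hBmeas
    have h2 : volume (B \ A) + volume (A ∩ B) = volume B := by
      rw [inter_comm]; exact measure_diff_add_inter B hAmeas
    have hfin : volume (A ∩ B) ≠ ⊤ :=
      ((measure_mono inter_subset_left).trans_lt measure_ball_lt_top).ne
    rw [hAv] at h1
    exact WithTop.add_right_cancel hfin (h1.trans h2.symm)
  have hout : ∫⁻ x in A \ B, g x ≤ ENNReal.ofReal (r ^ (-q)) * volume (A \ B) := by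
    rw [← setLIntegral_const]
    refine setLIntegral_mono measurable_const fun x hx => ?_
    have hxB : r ≤ ‖z - x‖ := by
      have := hx.2
      rw [hB, mem_ball, not_lt, dist_eq_norm, ← norm_sub_rev] at this
      exact this
    exact ENNReal.ofReal_le_ofReal
      (Real.rpow_le_rpow_of_nonpos hr hxB (neg_nonpos.2 hq.le))
  have hin : ENNReal.ofReal (r ^ (-q)) * volume (B \ A) ≤ ∫⁻ x in B \ A, g x := by
    have hv : volume (B \ A) = volume ((B \ A) \ {z}) :=
      (measure_diff_null (measure_singleton z)).symm
    rw [hv, ← setLIntegral_const]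
    calc ∫⁻ _ in (B \ A) \ {z}, ENNReal.ofReal (r ^ (-q))
        ≤ ∫⁻ x in (B \ A) \ {z}, g x := by
          refine setLIntegral_mono hgmeas fun x hx => ?_
          have hxz : x ≠ z := fun h => hx.2 (by simp [h])
          have h0 : 0 < ‖z - x‖ := by
            rw [norm_pos_iff]; exact sub_ne_zero.2 (Ne.symm hxz)
          have hlt : ‖z - x‖ ≤ r := by
            have := hx.1.1
            rw [hB, mem_ball, dist_eq_norm, ← norm_sub_rev] at this
            exact this.le
          exact ENNReal.ofReal_le_ofReal
            (Real.rpow_le_rpow_of_nonpos h0 hlt (neg_nonpos.2 hq.le))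
      _ ≤ ∫⁻ x in B \ A, g x := lintegral_mono_set diff_subset
  calc ∫⁻ x in A, g x
      = (∫⁻ x in A ∩ B, g x) + ∫⁻ x in A \ B, g x :=
        (lintegral_inter_add_diff g A hBmeas).symm
    _ ≤ (∫⁻ x in A ∩ B, g x) + ENNReal.ofReal (r ^ (-q)) * volume (A \ B) :=
        add_le_add_right hout _
    _ = (∫⁻ x in A ∩ B, g x) + ENNReal.ofReal (r ^ (-q)) * volume (B \ A) := by rw [hABvol]
    _ ≤ (∫⁻ x in A ∩ B, g x) + ∫⁻ x in B \ A, g x := add_le_add_right hin _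
    _ = (∫⁻ x in B ∩ A, g x) + ∫⁻ x in B \ A, g x := by rw [inter_comm]
    _ = ∫⁻ x in B, g x := lintegral_inter_add_diff g B hAmeas


/-- For `1 < q < 2` and `Δ_n` the disk of radius `1/n` about `x₀`, the averaged potential
`w_n(z) = (1/m(Δ_n)) ∫_{Δ_n} |x-x₀|^q / |z-x|^q dm_x` is bounded by `2/(2-q)` for all `z`
and all `n ≥ 1`. -/
theorem averaged_potential_bounded
    (q : ℝ) (hq1 : 1 < q) (hq2 : q < 2) (x₀ : ℂ) (n : ℕ) (hn : 0 < n) (z : ℂ) :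
    (volume (ball x₀ (1 / (n : ℝ)))).toReal⁻¹ *
        (∫ x in ball x₀ (1 / (n : ℝ)), ‖x - x₀‖ ^ q / ‖z - x‖ ^ q) ≤ 2 / (2 - q) := by
  have hn' : (0:ℝ) < n := Nat.cast_pos.2 hn
  set r : ℝ := 1 / (n : ℝ) with hrdef
  have hr : 0 < r := by positivity
  have hq0 : 0 < q := lt_trans one_pos hq1
  have h2q : 0 < 2 - q := by linarith
  have hFmeas : Measurable fun x : ℂ => ‖x - x₀‖ ^ q / ‖z - x‖ ^ q :=
    ((measurable_id.sub measurable_const).norm.pow_const q).div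
      ((measurable_const.sub measurable_id).norm.pow_const q)
  have hnn : 0 ≤ᵐ[volume.restrict (ball x₀ r)] fun x : ℂ => ‖x - x₀‖ ^ q / ‖z - x‖ ^ q :=
    ae_of_all _ fun x => div_nonneg (Real.rpow_nonneg (norm_nonneg _) _)
      (Real.rpow_nonneg (norm_nonneg _) _)
  rw [integral_eq_lintegral_of_nonneg_ae hnn hFmeas.aestronglyMeasurable]
  have hgmeas : Measurable fun x : ℂ => ENNReal.ofReal (‖z - x‖ ^ (-q)) :=
    ((measurable_const.sub measurable_id).norm.pow_const (-q)).ennreal_ofReal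
  set V : ENNReal :=
    ENNReal.ofReal (r ^ q) * (2 * volume (ball (0:ℂ) 1) *
      ENNReal.ofReal (r ^ (2 - q) / (2 - q))) with hV
  have key : (∫⁻ x in ball x₀ r, ENNReal.ofReal (‖x - x₀‖ ^ q / ‖z - x‖ ^ q)) ≤ V := by
    calc (∫⁻ x in ball x₀ r, ENNReal.ofReal (‖x - x₀‖ ^ q / ‖z - x‖ ^ q))
        ≤ ∫⁻ x in ball x₀ r,
            ENNReal.ofReal (r ^ q) * ENNReal.ofReal (‖z - x‖ ^ (-q)) := by
          refine setLIntegral_mono (measurable_const.mul hgmeas) fun x hx => ?_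
          have hxr : ‖x - x₀‖ ≤ r := by
            rw [mem_ball, dist_eq_norm] at hx; exact hx.le
          have hrw : ‖x - x₀‖ ^ q / ‖z - x‖ ^ q = ‖x - x₀‖ ^ q * ‖z - x‖ ^ (-q) := by
            rw [Real.rpow_neg (norm_nonneg _), div_eq_mul_inv]
          rw [hrw, ENNReal.ofReal_mul (Real.rpow_nonneg (norm_nonneg _) _)]
          exact mul_le_mul_left
            (ENNReal.ofReal_le_ofReal
              (Real.rpow_le_rpow (norm_nonneg _) hxr hq0.le)) _
      _ = ENNReal.ofReal (r ^ q) *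
            ∫⁻ x in ball x₀ r, ENNReal.ofReal (‖z - x‖ ^ (-q)) :=
          lintegral_const_mul _ hgmeas
      _ ≤ ENNReal.ofReal (r ^ q) *
            ∫⁻ x in ball z r, ENNReal.ofReal (‖z - x‖ ^ (-q)) :=
          mul_le_mul_right (lintegral_rearrange r hr q hq0 x₀ z) _
      _ = V := by
        rw [hV]
        congr 1
        have hpre : (fun u : ℂ => z - u) ⁻¹' ball z r = ball 0 r := by
          ext u
          simp [mem_ball, dist_eq_norm, norm_sub_rev]
        have hcv := MeasurePreserving.setLIntegral_comp_preimage_emb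
          (Measure.measurePreserving_sub_left (volume : Measure ℂ) z)
          (MeasurableEquiv.subLeft z).measurableEmbedding
          (fun x => ENNReal.ofReal (‖z - x‖ ^ (-q))) (ball z r)
        rw [hpre] at hcv
        rw [← hcv]
        have : ∀ u : ℂ, z - (z - u) = u := fun u => by ring
        simp_rw [this]
        exact lintegral_ball_rpow r hr q hq0 hq2
  have hVne : V ≠ ⊤ := by
    rw [hV]
    refine ENNReal.mul_ne_top ENNReal.ofReal_ne_top ?_
    exact ENNReal.mul_ne_top
      (ENNReal.mul_ne_top (by norm_num) measure_ball_lt_top.ne) ENNReal.ofReal_ne_top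
  have hle : (∫⁻ x in ball x₀ r, ENNReal.ofReal (‖x - x₀‖ ^ q / ‖z - x‖ ^ q)).toReal ≤
      V.toReal := ENNReal.toReal_mono hVne key
  have hVval : V.toReal = r ^ q * (2 * Real.pi * (r ^ (2 - q) / (2 - q))) := by
    rw [hV]
    rw [ENNReal.toReal_mul, ENNReal.toReal_mul, ENNReal.toReal_mul]
    rw [ENNReal.toReal_ofReal (Real.rpow_nonneg hr.le _),
      ENNReal.toReal_ofReal (by positivity)]
    simp [Complex.volume_ball]
  have hvol : (volume (ball x₀ r)).toReal = Real.pi * r ^ 2 := by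
    rw [Complex.volume_ball]
    rw [ENNReal.toReal_mul]
    simp [ENNReal.toReal_pow, ENNReal.toReal_ofReal hr.le]
    ring
  calc (volume (ball x₀ r)).toReal⁻¹ *
        (∫⁻ x in ball x₀ r, ENNReal.ofReal (‖x - x₀‖ ^ q / ‖z - x‖ ^ q)).toReal
      ≤ (volume (ball x₀ r)).toReal⁻¹ * V.toReal := by
        refine mul_le_mul_of_nonneg_left hle (inv_nonneg.2 ENNReal.toReal_nonneg)
    _ = 2 / (2 - q) := by
        rw [hVval, hvol]
        have hrq : r ^ q * r ^ (2 - q) = r ^ 2 := by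
          rw [← Real.rpow_add hr, ← Real.rpow_natCast r 2]
          norm_num
        field_simp
        rw [← hrq]
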